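/- For the 2D Radon transform g(s, ω) = ∫_{x·ω = s} f(x) dx of a continuous compactly supported f : R^2 → R, the k-th moment G_k(ω) = ∫_{-∞}^{∞} s^k g(s, ω) ds, regarded as a function of the unit vector ω, is the restriction to the unit circle of a homogeneous polynomial of degree k in ω. -/

import Mathlib

open MeasureTheory
noncomputable section

abbrev E2 := EuclideanSpace ℝ (Fin 2)

/-- The vector `ω` rotated by `π/2` (a unit vector orthogonal to `ω`). -/
def perp (ω : E2) : E2 :=
  (EuclideanSpace.equiv (Fin 2) ℝ).symm ![-(ω 1), ω 0]

/-- The 2D Radon transform: the integral of `f` over the line `{x : x·ω = s}`,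
parametrized as `s • ω + t • perp ω`, `t ∈ ℝ`. -/
def radon2D (f : E2 → ℝ) (s : ℝ) (ω : E2) : ℝ :=
  ∫ t : ℝ, f (s • ω + t • perp ω)


lemma inner_eq (x y : E2) : (inner ℝ x y : ℝ) = x 0 * y 0 + x 1 * y 1 := by
  simp [PiLp.inner_apply, Fin.sum_univ_two, RCLike.inner_apply, mul_comm]

lemma unit_sq (ω : E2) (h : ‖ω‖ = 1) : ω 0 * ω 0 + ω 1 * ω 1 = 1 := by
  have h2 : (inner ℝ ω ω : ℝ) = ω 0 * ω 0 + ω 1 * ω 1 := inner_eq ω ω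
  rw [real_inner_self_eq_norm_mul_norm, h] at h2; linarith

def rotL (ω : E2) : E2 →ₗ[ℝ] E2 where
  toFun x := x 0 • ω + x 1 • perp ω
  map_add' x y := by
    simp only [PiLp.add_apply, add_smul]; module
  map_smul' c x := by
    simp only [PiLp.smul_apply, smul_eq_mul, RingHom.id_apply, mul_smul]; module

lemma perp0 (ω : E2) : perp ω 0 = -(ω 1) := by simp [perp]
lemma perp1 (ω : E2) : perp ω 1 = ω 0 := by simp [perp]

lemma rot_inner (ω : E2) (hω : ‖ω‖ = 1) (x y : E2) :
    (inner ℝ (rotL ω x) (rotL ω y) : ℝ) = inner ℝ x y := by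
  have h := unit_sq ω hω
  simp only [rotL, LinearMap.coe_mk, AddHom.coe_mk, inner_eq, PiLp.add_apply,
    PiLp.smul_apply, smul_eq_mul, perp0, perp1]
  linear_combination (x 0 * y 0 + x 1 * y 1) * h

def rotI (ω : E2) (hω : ‖ω‖ = 1) : E2 ≃ₗᵢ[ℝ] E2 :=
  ((rotL ω).isometryOfInner (rot_inner ω hω)).toLinearIsometryEquiv rfl

lemma rotI_apply (ω : E2) (hω : ‖ω‖ = 1) (x : E2) :
    rotI ω hω x = x 0 • ω + x 1 • perp ω := rfl

def homeoM (ω : E2) (hω : ‖ω‖ = 1) : (ℝ × ℝ) ≃ₜ E2 :=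
  ((Homeomorph.finTwoArrow).symm.trans
    (EuclideanSpace.equiv (Fin 2) ℝ).toHomeomorph.symm).trans (rotI ω hω).toHomeomorph

lemma homeoM_apply (ω : E2) (hω : ‖ω‖ = 1) (p : ℝ × ℝ) :
    homeoM ω hω p = p.1 • ω + p.2 • perp ω := by
  simp [homeoM, rotI_apply]

lemma measurePreserving_homeoM (ω : E2) (hω : ‖ω‖ = 1) :
    MeasurePreserving (homeoM ω hω) volume volume := by
  have h1 : MeasurePreserving (MeasurableEquiv.finTwoArrow (α := ℝ)).symm volume volume :=
    (volume_preserving_finTwoArrow ℝ).symm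
  have h2 : MeasurePreserving (MeasurableEquiv.toLp 2 (Fin 2 → ℝ))
      volume volume := (EuclideanSpace.volume_preserving_symm_measurableEquiv_toLp (Fin 2)).symm
  have h3 := (rotI ω hω).measurePreserving
  have := h3.comp (h2.comp h1)
  exact this

theorem radon_moment_conditions (f : E2 → ℝ)
    (hf : Continuous f) (hsupp : HasCompactSupport f) (k : ℕ) :
    ∃ P : MvPolynomial (Fin 2) ℝ, P.IsHomogeneous k ∧
      ∀ ω : E2, ‖ω‖ = 1 →
        (∫ s : ℝ, s ^ k * radon2D f s ω) = MvPolynomial.eval (fun i => ω i) P := by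
  classical
  set I : ℕ → ℝ := fun j => ∫ x : E2, (x 0) ^ j * (x 1) ^ (k - j) * f x with hI
  refine ⟨∑ j ∈ Finset.range (k+1),
    MvPolynomial.C ((k.choose j : ℝ) * I j) *
      (MvPolynomial.X 0 ^ j * MvPolynomial.X 1 ^ (k-j)), ?_, ?_⟩
  · apply MvPolynomial.IsHomogeneous.sum
    intro j hj
    have hjk : j ≤ k := Nat.lt_succ_iff.mp (Finset.mem_range.mp hj)
    have h1 : (MvPolynomial.X (0 : Fin 2) ^ j * MvPolynomial.X 1 ^ (k-j) :
        MvPolynomial (Fin 2) ℝ).IsHomogeneous (j + (k-j)) :=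
      (MvPolynomial.isHomogeneous_X_pow _ _).mul (MvPolynomial.isHomogeneous_X_pow _ _)
    rw [Nat.add_sub_cancel' hjk] at h1
    exact h1.C_mul _
  intro ω hω
  have hgint : ∀ g : E2 → ℝ, Continuous g → Integrable (fun x => g x * f x) :=
    fun g hg => (hg.mul hf).integrable_of_hasCompactSupport hsupp.mul_left
  set M := homeoM ω hω with hM
  set F : ℝ × ℝ → ℝ := fun p => p.1 ^ k * f (M p) with hF
  have hFc : Continuous F := (continuous_fst.pow k).mul (hf.comp M.continuous)
  have hFs : HasCompactSupport F := (hsupp.comp_homeomorph M).mul_left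
  have hFint : Integrable F := hFc.integrable_of_hasCompactSupport hFs
  have step1 : (∫ s : ℝ, s ^ k * radon2D f s ω) = ∫ s : ℝ, ∫ t : ℝ, F (s, t) := by
    congr 1; funext s
    rw [radon2D, ← MeasureTheory.integral_const_mul]
    congr 1
  have step2 : (∫ s : ℝ, ∫ t : ℝ, F (s, t)) = ∫ p : ℝ × ℝ, F p := by
    rw [MeasureTheory.integral_integral hFint]
    rfl
  have step3 : (∫ p : ℝ × ℝ, F p) = ∫ x : E2, (inner ℝ x ω : ℝ) ^ k * f x := by
    have hmp := measurePreserving_homeoM ω hω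
    rw [← hmp.integral_comp M.measurableEmbedding (fun x => (inner ℝ x ω : ℝ) ^ k * f x)]
    congr 1; funext p
    have hin : (inner ℝ (M p) ω : ℝ) = p.1 := by
      rw [hM, homeoM_apply, inner_eq]
      simp only [PiLp.add_apply, PiLp.smul_apply, smul_eq_mul, perp0, perp1]
      linear_combination p.1 * unit_sq ω hω
    rw [hin]
  have expand : ∀ x : E2, (inner ℝ x ω : ℝ) ^ k * f x =
      ∑ j ∈ Finset.range (k+1),
        ((ω 0) ^ j * (ω 1) ^ (k-j) * (k.choose j : ℝ)) * ((x 0) ^ j * (x 1) ^ (k-j) * f x) := by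
    intro x
    rw [inner_eq, add_pow, Finset.sum_mul]
    refine Finset.sum_congr rfl fun j hj => ?_
    ring
  have step4 : (∫ x : E2, (inner ℝ x ω : ℝ) ^ k * f x) =
      ∑ j ∈ Finset.range (k+1),
        ((ω 0) ^ j * (ω 1) ^ (k-j) * (k.choose j : ℝ)) * I j := by
    simp_rw [expand]
    rw [MeasureTheory.integral_finset_sum]
    · exact Finset.sum_congr rfl fun j hj => MeasureTheory.integral_const_mul _ _
    · intro j hj
      exact (hgint _ (((PiLp.continuous_apply 2 _ 0).pow j).mul ((PiLp.continuous_apply 2 _ 1).pow (k-j)))).const_mul _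
  rw [step1, step2, step3, step4]
  simp only [map_sum, MvPolynomial.eval_mul, MvPolynomial.eval_C, MvPolynomial.eval_pow,
    MvPolynomial.eval_X]
  exact Finset.sum_congr rfl fun j hj => by ring
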